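/- In any associative unital ℂ-algebra A whose elements b⁺, b⁻, f⁺, f⁻ satisfy the defining relations of P_BF^{(1,1)}, the odd elements Q^±, R^± satisfy the anticommutation relations: (Q⁺)² = (Q⁻)² = (R⁺)² = (R⁻)² = 0; {Q⁺, Q⁻} = ½{b⁺, b⁻} + ½[f⁺, f⁻]; {R⁺, R⁻} = ½{b⁺, b⁻} − ½[f⁺, f⁻]; {Q⁺, R⁺} = 0; {Q⁻, R⁻} = 0; {Q⁻, R⁺} = (b⁺)²; {Q⁺, R⁻} = (b⁻)². -/
import Mathlib


/-- The commutator `[x, y] = x*y - y*x`. -/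
def pbComm {A : Type*} [Ring A] (x y : A) : A := x * y - y * x

/-- The anticommutator `{x, y} = x*y + y*x`. -/
def pbAComm {A : Type*} [Ring A] (x y : A) : A := x * y + y * x

/-- A sign, i.e. `+1` or `-1`, regarded as an integer. -/
def IsSign (x : ℤ) : Prop := x = 1 ∨ x = -1

/-- The defining relations of the relative parabose set `P_BF^{(1,1)}` in a single
parabosonic and a single parafermionic degree of freedom: `b 1 = b⁺`, `b (-1) = b⁻`,
`f 1 = f⁺`, `f (-1) = f⁻`. -/
structure PBF11Relations {A : Type*} [Ring A] [Algebra ℂ A] (b f : ℤ → A) : Prop where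
  rel_bbb : ∀ (ξ η ε : ℤ), IsSign ξ → IsSign η → IsSign ε →
    pbComm (pbAComm (b ξ) (b η)) (b ε)
      = ((ε - η : ℤ) : ℂ) • b ξ + ((ε - ξ : ℤ) : ℂ) • b η
  rel_fff : ∀ (ξ η ε : ℤ), IsSign ξ → IsSign η → IsSign ε →
    pbComm (pbComm (f ξ) (f η)) (f ε)
      = ((((ε - η) ^ 2 : ℤ) : ℂ) / 2) • f ξ - ((((ε - ξ) ^ 2 : ℤ) : ℂ) / 2) • f η
  rel_bbf : ∀ (ξ η ε : ℤ), IsSign ξ → IsSign η → IsSign ε →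
    pbComm (pbAComm (b ξ) (b η)) (f ε) = 0
  rel_ffb : ∀ (ξ η ε : ℤ), IsSign ξ → IsSign η → IsSign ε →
    pbComm (pbComm (f ξ) (f η)) (b ε) = 0
  rel_fbb : ∀ (ξ η ε : ℤ), IsSign ξ → IsSign η → IsSign ε →
    pbComm (pbAComm (f ξ) (b η)) (b ε) = ((ε - η : ℤ) : ℂ) • f ξ
  rel_bff : ∀ (ξ η ε : ℤ), IsSign ξ → IsSign η → IsSign ε →
    pbAComm (pbAComm (b ξ) (f η)) (f ε) = ((((ε - η) ^ 2 : ℤ) : ℂ) / 2) • b ξ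

/-- `Q⁺ := ½{b⁻, f⁺}`. -/
noncomputable def Qp {A : Type*} [Ring A] [Algebra ℂ A] (b f : ℤ → A) : A :=
  (1 / 2 : ℂ) • pbAComm (b (-1)) (f 1)

/-- `Q⁻ := ½{b⁺, f⁻}`. -/
noncomputable def Qm {A : Type*} [Ring A] [Algebra ℂ A] (b f : ℤ → A) : A :=
  (1 / 2 : ℂ) • pbAComm (b 1) (f (-1))

/-- `R⁺ := ½{b⁺, f⁺}`. -/
noncomputable def Rp {A : Type*} [Ring A] [Algebra ℂ A] (b f : ℤ → A) : A :=
  (1 / 2 : ℂ) • pbAComm (b 1) (f 1)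

/-- `R⁻ := ½{b⁻, f⁻}`. -/
noncomputable def Rm {A : Type*} [Ring A] [Algebra ℂ A] (b f : ℤ → A) : A :=
  (1 / 2 : ℂ) • pbAComm (b (-1)) (f (-1))

lemma pbKey {A : Type*} [Ring A] [Algebra ℂ A] (X b b' f f' : A) (α c : ℂ)
    (hb : X * b' - b' * X = α • f)
    (hf : X * f' + f' * X = c • b) :
    X * (b' * f' + f' * b') + (b' * f' + f' * b') * X
      = c • (b * b' + b' * b) + α • (f * f' - f' * f) := by
  have hb' : X * b' = b' * X + α • f := by rw [← hb]; abel
  have hf' : X * f' = c • b - f' * X := by rw [← hf]; abel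
  calc X * (b' * f' + f' * b') + (b' * f' + f' * b') * X
      = (X * b') * f' + (X * f') * b' + (b' * f') * X + (f' * b') * X := by noncomm_ring
    _ = (b' * X + α • f) * f' + (c • b - f' * X) * b' + (b' * f') * X + (f' * b') * X := by
        rw [hb', hf']
    _ = b' * (X * f') + α • (f * f') + c • (b * b') - f' * (X * b')
        + (b' * f') * X + (f' * b') * X := by noncomm_ring
    _ = b' * (c • b - f' * X) + α • (f * f') + c • (b * b') - f' * (b' * X + α • f)
        + (b' * f') * X + (f' * b') * X := by rw [hb', hf']
    _ = c • (b * b' + b' * b) + α • (f * f' - f' * f) := by noncomm_ring; module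

lemma pbMain {A : Type*} [Ring A] [Algebra ℂ A] (b f : ℤ → A) (h : PBF11Relations b f)
    (ξ η ξ' η' : ℤ) (hξ : IsSign ξ) (hη : IsSign η) (hξ' : IsSign ξ') (hη' : IsSign η')
    (α c : ℂ) (hα : ((ξ' - ξ : ℤ) : ℂ) = α) (hc : ((((η' - η) ^ 2 : ℤ) : ℂ) / 2) = c) :
    (b ξ * f η + f η * b ξ) * (b ξ' * f η' + f η' * b ξ')
      + (b ξ' * f η' + f η' * b ξ') * (b ξ * f η + f η * b ξ)
      = c • (b ξ * b ξ' + b ξ' * b ξ) + α • (f η * f η' - f η' * f η) := by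
  have hb : (b ξ * f η + f η * b ξ) * b ξ' - b ξ' * (b ξ * f η + f η * b ξ) = α • f η := by
    have H := h.rel_fbb η ξ ξ' hη hξ hξ'
    simp only [pbComm, pbAComm, hα] at H
    rw [← H]; noncomm_ring
  have hf : (b ξ * f η + f η * b ξ) * f η' + f η' * (b ξ * f η + f η * b ξ) = c • b ξ := by
    have H := h.rel_bff ξ η η' hξ hη hη'
    simp only [pbComm, pbAComm, hc] at H
    exact H
  have := pbKey (b ξ * f η + f η * b ξ) (b ξ) (b ξ') (f η) (f η') α c hb hf
  exact this

/-- The odd elements `Q^±, R^±` of `P_BF^{(1,1)}` satisfy the stated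
anticommutation relations. -/
theorem QR_anticommutation {A : Type*} [Ring A] [Algebra ℂ A]
    (b f : ℤ → A) (h : PBF11Relations b f) :
    Qp b f * Qp b f = 0 ∧
    Qm b f * Qm b f = 0 ∧
    Rp b f * Rp b f = 0 ∧
    Rm b f * Rm b f = 0 ∧
    pbAComm (Qp b f) (Qm b f)
      = (1 / 2 : ℂ) • pbAComm (b 1) (b (-1)) + (1 / 2 : ℂ) • pbComm (f 1) (f (-1)) ∧
    pbAComm (Rp b f) (Rm b f)
      = (1 / 2 : ℂ) • pbAComm (b 1) (b (-1)) - (1 / 2 : ℂ) • pbComm (f 1) (f (-1)) ∧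
    pbAComm (Qp b f) (Rp b f) = 0 ∧
    pbAComm (Qm b f) (Rm b f) = 0 ∧
    pbAComm (Qm b f) (Rp b f) = b 1 * b 1 ∧
    pbAComm (Qp b f) (Rm b f) = b (-1) * b (-1) := by
  have sp : IsSign 1 := Or.inl rfl
  have sm : IsSign (-1) := Or.inr rfl
  have sq : ∀ ξ η : ℤ, IsSign ξ → IsSign η →
      ((1 / 2 : ℂ) • pbAComm (b ξ) (f η)) * ((1 / 2 : ℂ) • pbAComm (b ξ) (f η)) = 0 := by
    intro ξ η hξ hη
    have H := pbMain b f h ξ η ξ η hξ hη hξ hη 0 0 (by norm_num) (by norm_num)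
    simp only [zero_smul, add_zero] at H
    have h2 : (2 : ℂ) • ((b ξ * f η + f η * b ξ) * (b ξ * f η + f η * b ξ)) = 0 := by
      rw [two_smul]; exact H
    have hXX : (b ξ * f η + f η * b ξ) * (b ξ * f η + f η * b ξ) = 0 := by
      have := congrArg (fun y => (1 / 2 : ℂ) • y) h2
      simpa [smul_smul] using this
    simp only [pbAComm]
    rw [smul_mul_assoc, mul_smul_comm, hXX, smul_zero, smul_zero]
  refine ⟨sq (-1) 1 sm sp, sq 1 (-1) sp sm, sq 1 1 sp sp, sq (-1) (-1) sm sm, ?_, ?_, ?_, ?_, ?_, ?_⟩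
  · have H := pbMain b f h (-1) 1 1 (-1) sm sp sp sm 2 2 (by norm_num) (by norm_num)
    simp only [Qp, Qm, pbAComm, pbComm]
    rw [smul_mul_smul_comm, smul_mul_smul_comm, ← smul_add, H]
    module
  · have H := pbMain b f h 1 1 (-1) (-1) sp sp sm sm (-2) 2 (by norm_num) (by norm_num)
    simp only [Rp, Rm, pbAComm, pbComm]
    rw [smul_mul_smul_comm, smul_mul_smul_comm, ← smul_add, H]
    module
  · have H := pbMain b f h (-1) 1 1 1 sm sp sp sp 2 0 (by norm_num) (by norm_num)
    simp only [Qp, Rp, pbAComm, pbComm]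
    rw [smul_mul_smul_comm, smul_mul_smul_comm, ← smul_add, H]
    module
  · have H := pbMain b f h 1 (-1) (-1) (-1) sp sm sm sm (-2) 0 (by norm_num) (by norm_num)
    simp only [Qm, Rm, pbAComm, pbComm]
    rw [smul_mul_smul_comm, smul_mul_smul_comm, ← smul_add, H]
    module
  · have H := pbMain b f h 1 (-1) 1 1 sp sm sp sp 0 2 (by norm_num) (by norm_num)
    simp only [Qm, Rp, pbAComm, pbComm]
    rw [smul_mul_smul_comm, smul_mul_smul_comm, ← smul_add, H]
    module
  · have H := pbMain b f h (-1) 1 (-1) (-1) sm sp sm sm 0 2 (by norm_num) (by norm_num)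
    simp only [Qp, Rm, pbAComm, pbComm]
    rw [smul_mul_smul_comm, smul_mul_smul_comm, ← smul_add, H]
    module
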